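/- Let T > 0, 0 < η < 1 and p ≥ 1. There exists a constant c > 0 (depending only on T, η and p) such that for all 0 ≤ s₁ < s₂ ≤ T, the function h_{s₁,s₂}(t) = ∫₀ᵗ 1_{[s₁,s₂]}(r) dr satisfies ‖h_{s₁,s₂}‖_{W_{η,p}} ≤ c (s₂ - s₁)^{1-η}, i.e. (∫₀ᵀ |h_{s₁,s₂}(t)|ᵖ dt + ∫₀ᵀ∫₀ᵀ |h_{s₁,s₂}(t) - h_{s₁,s₂}(s)|ᵖ / |t-s|^{1+pη} dt ds)^{1/p} ≤ c (s₂ - s₁)^{1-η}. -/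

import Mathlib

open MeasureTheory

/-- `h s₁ s₂ (t) = ∫₀ᵗ 1_{[s₁,s₂]}(r) dr`. -/
noncomputable def hFun (s₁ s₂ t : ℝ) : ℝ :=
  ∫ r in (0:ℝ)..t, Set.indicator (Set.Icc s₁ s₂) (fun _ => (1:ℝ)) r

open Set intervalIntegral

/-- The comparison kernel. -/
noncomputable def phiK (p η δ u : ℝ) : ℝ := (min u δ) ^ p / u ^ (1 + p * η)


/-- The comparison kernel. -/

lemma phiK_nonneg {p η δ : ℝ} (u : ℝ) (hu : 0 ≤ u) (hδ : 0 ≤ δ) :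
    0 ≤ phiK p η δ u :=
  div_nonneg (Real.rpow_nonneg (le_min hu hδ) _) (Real.rpow_nonneg hu _)

lemma phiK_intable_left {p η δ : ℝ} (hp : 1 ≤ p) (hη1 : η < 1) (hδ : 0 < δ) :
    IntervalIntegrable (phiK p η δ) volume 0 δ := by
  have hp0 : (0:ℝ) < p := lt_of_lt_of_le one_pos hp
  have hexp : (-1:ℝ) < p - 1 - p * η := by nlinarith
  rw [intervalIntegrable_iff_integrableOn_Ioc_of_le hδ.le]
  have h1 : IntegrableOn (fun u : ℝ => u ^ (p - 1 - p * η)) (Ioc 0 δ) volume :=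
    (intervalIntegral.intervalIntegrable_rpow' hexp (a := 0) (b := δ)).1
  refine h1.congr_fun (fun u hu => ?_) measurableSet_Ioc
  have hu0 : (0:ℝ) < u := hu.1
  have hmin : min u δ = u := min_eq_left hu.2
  rw [phiK, hmin, ← Real.rpow_sub hu0]
  ring_nf

lemma phiK_intable_right {p η δ T : ℝ} (hp : 1 ≤ p) (hδ : 0 < δ) (hδT : δ ≤ T) :
    IntervalIntegrable (phiK p η δ) volume δ T := by
  apply ContinuousOn.intervalIntegrable
  have hsub : uIcc δ T = Icc δ T := uIcc_of_le hδT
  rw [hsub]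
  have hpos : ∀ x ∈ Icc δ T, (0:ℝ) < x := fun x hx => lt_of_lt_of_le hδ hx.1
  apply ContinuousOn.div
  · exact (continuous_id.min continuous_const).continuousOn.rpow_const
      (fun x _ => Or.inr (le_trans zero_le_one hp))
  · exact continuousOn_id.rpow_const (fun x hx => Or.inl (hpos x hx).ne')
  · exact fun x hx => (Real.rpow_pos_of_pos (hpos x hx) _).ne'

lemma integral_phiK_le {T η p δ : ℝ} (hη0 : 0 < η) (hη1 : η < 1) (hp : 1 ≤ p)
    (hδ : 0 < δ) (hδT : δ ≤ T) :
    ∫ u in (0:ℝ)..T, phiK p η δ u ≤ (1 / (p - p * η) + 1 / (p * η)) * δ ^ (p - p * η) := by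
  have hp0 : (0:ℝ) < p := lt_of_lt_of_le one_pos hp
  have hP : (0:ℝ) < p - p * η := by nlinarith
  have hpη : (0:ℝ) < p * η := by positivity
  rw [← integral_add_adjacent_intervals (phiK_intable_left hp hη1 hδ)
      (phiK_intable_right hp hδ hδT)]
  have h1 : ∫ u in (0:ℝ)..δ, phiK p η δ u = δ ^ (p - p * η) / (p - p * η) := by
    have : ∫ u in (0:ℝ)..δ, phiK p η δ u = ∫ u in (0:ℝ)..δ, u ^ (p - 1 - p * η) := by
      rw [integral_of_le hδ.le, integral_of_le hδ.le]
      refine setIntegral_congr_fun measurableSet_Ioc (fun u hu => ?_)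
      have hu0 : (0:ℝ) < u := hu.1
      rw [phiK, min_eq_left hu.2, ← Real.rpow_sub hu0]
      ring_nf
    rw [this, integral_rpow (Or.inl (by nlinarith))]
    have he : p - 1 - p * η + 1 = p - p * η := by ring
    rw [he, Real.zero_rpow hP.ne', sub_zero]
  have h2 : ∫ u in δ..T, phiK p η δ u ≤ 1 / (p * η) * δ ^ (p - p * η) := by
    have heq : ∫ u in δ..T, phiK p η δ u = δ ^ p * ∫ u in δ..T, u ^ (-(1 + p * η)) := by
      rw [← intervalIntegral.integral_const_mul]
      refine integral_congr (fun u hu => ?_)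
      rw [uIcc_of_le hδT] at hu
      have hu0 : (0:ℝ) < u := lt_of_lt_of_le hδ hu.1
      rw [phiK, min_eq_right hu.1, Real.rpow_neg hu0.le, div_eq_mul_inv]
    rw [heq, integral_rpow (Or.inr ⟨by nlinarith, by
        rw [uIcc_of_le hδT]; exact fun h => absurd h.1 (by linarith)⟩)]
    have he : -(1 + p * η) + 1 = -(p * η) := by ring
    rw [he]
    have hbound : (T ^ (-(p * η)) - δ ^ (-(p * η))) / (-(p * η))
        ≤ δ ^ (-(p * η)) / (p * η) := by
      have heq2 : (T ^ (-(p * η)) - δ ^ (-(p * η))) / (-(p * η))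
          = (δ ^ (-(p * η)) - T ^ (-(p * η))) / (p * η) := by ring
      rw [heq2, div_le_div_iff_of_pos_right hpη]
      exact sub_le_self _ (Real.rpow_nonneg (le_trans hδ.le hδT) _)
    calc δ ^ p * ((T ^ (-(p * η)) - δ ^ (-(p * η))) / (-(p * η)))
        ≤ δ ^ p * (δ ^ (-(p * η)) / (p * η)) := by
          exact mul_le_mul_of_nonneg_left hbound (Real.rpow_nonneg hδ.le _)
      _ = 1 / (p * η) * δ ^ (p - p * η) := by
          have hmul : δ ^ p * δ ^ (-(p * η)) = δ ^ (p - p * η) := by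
            rw [← Real.rpow_add hδ, ← sub_eq_add_neg]
          rw [← hmul]; ring
  calc (∫ u in (0:ℝ)..δ, phiK p η δ u) + ∫ u in δ..T, phiK p η δ u
      ≤ δ ^ (p - p * η) / (p - p * η) + 1 / (p * η) * δ ^ (p - p * η) := by
        rw [h1]; exact add_le_add_right h2 _
    _ = (1 / (p - p * η) + 1 / (p * η)) * δ ^ (p - p * η) := by ring

lemma phiK_abs_intable_pos {p η δ T : ℝ} (hp : 1 ≤ p) (hη1 : η < 1)
    (hδ : 0 < δ) (hδT : δ ≤ T) :
    IntervalIntegrable (fun u => phiK p η δ |u|) volume 0 T := by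
  have h0T : IntervalIntegrable (phiK p η δ) volume 0 T :=
    (phiK_intable_left hp hη1 hδ).trans (phiK_intable_right hp hδ hδT)
  have hT0 : (0:ℝ) ≤ T := le_trans hδ.le hδT
  rw [intervalIntegrable_iff_integrableOn_Ioc_of_le hT0] at h0T ⊢
  exact h0T.congr_fun (fun u hu => by rw [abs_of_pos hu.1]) measurableSet_Ioc

lemma phiK_abs_intable {p η δ T : ℝ} (hp : 1 ≤ p) (hη1 : η < 1)
    (hδ : 0 < δ) (hδT : δ ≤ T) :
    IntervalIntegrable (fun u => phiK p η δ |u|) volume (-T) T := by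
  have h1 := phiK_abs_intable_pos hp hη1 hδ hδT
  have h2 : IntervalIntegrable (fun u => phiK p η δ |u|) volume (-T) 0 := by
    have := ((IntervalIntegrable.iff_comp_neg (by finiteness)).mp h1)
    simpa [abs_neg] using this.symm
  exact h2.trans h1

lemma integral_phiK_abs_le {T η p δ : ℝ} (hη0 : 0 < η) (hη1 : η < 1) (hp : 1 ≤ p)
    (hδ : 0 < δ) (hδT : δ ≤ T) :
    ∫ u in (-T)..T, phiK p η δ |u|
      ≤ 2 * ((1 / (p - p * η) + 1 / (p * η)) * δ ^ (p - p * η)) := by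
  have hT0 : (0:ℝ) ≤ T := le_trans hδ.le hδT
  have h1 := phiK_abs_intable_pos hp hη1 hδ hδT
  have h2 : IntervalIntegrable (fun u => phiK p η δ |u|) volume (-T) 0 := by
    have := ((IntervalIntegrable.iff_comp_neg (by finiteness)).mp h1)
    simpa [abs_neg] using this.symm
  rw [← integral_add_adjacent_intervals h2 h1]
  have hneg : (∫ u in (-T)..(0:ℝ), phiK p η δ |u|) = ∫ u in (0:ℝ)..T, phiK p η δ |u| := by
    have := intervalIntegral.integral_comp_neg (a := (0:ℝ)) (b := T)
      (f := fun u => phiK p η δ |u|)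
    simpa [abs_neg] using this.symm
  have habs : (∫ u in (0:ℝ)..T, phiK p η δ |u|) = ∫ u in (0:ℝ)..T, phiK p η δ u := by
    refine integral_congr (fun u hu => ?_)
    rw [uIcc_of_le hT0] at hu
    rw [abs_of_nonneg hu.1]
  rw [hneg, habs]
  have := integral_phiK_le hη0 hη1 hp hδ hδT (T := T)
  linarith

lemma inner_phiK_le {T η p δ : ℝ} (hη0 : 0 < η) (hη1 : η < 1) (hp : 1 ≤ p)
    (hδ : 0 < δ) (hδT : δ ≤ T) {t : ℝ} (ht0 : 0 ≤ t) (htT : t ≤ T) :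
    ∫ s in (0:ℝ)..T, phiK p η δ |t - s|
      ≤ 2 * ((1 / (p - p * η) + 1 / (p * η)) * δ ^ (p - p * η)) := by
  have hcomp : (∫ s in (0:ℝ)..T, phiK p η δ |t - s|)
      = ∫ u in (t - T)..(t - 0), phiK p η δ |u| :=
    intervalIntegral.integral_comp_sub_left (a := 0) (b := T)
      (fun u => phiK p η δ |u|) t
  rw [hcomp]
  refine le_trans (intervalIntegral.integral_mono_interval (by linarith) (by linarith)
    (by linarith) ?_ (phiK_abs_intable hp hη1 hδ hδT))
    (integral_phiK_abs_le hη0 hη1 hp hδ hδT)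
  exact Filter.Eventually.of_forall (fun u => phiK_nonneg _ (abs_nonneg u) hδ.le)

lemma ind_intable (s₁ s₂ a b : ℝ) :
    IntervalIntegrable (Set.indicator (Set.Icc s₁ s₂) (fun _ => (1:ℝ))) volume a b := by
  apply MeasureTheory.Integrable.intervalIntegrable
  rw [integrable_indicator_iff measurableSet_Icc]
  exact integrableOn_const measure_Icc_lt_top.ne

lemma hFun_nonneg {s₁ s₂ t : ℝ} (ht : 0 ≤ t) : 0 ≤ hFun s₁ s₂ t :=
  intervalIntegral.integral_nonneg ht
    (fun u _ => Set.indicator_nonneg (fun _ _ => zero_le_one) u)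

lemma hFun_le {s₁ s₂ t : ℝ} (ht : 0 ≤ t) (h12 : s₁ ≤ s₂) : hFun s₁ s₂ t ≤ s₂ - s₁ := by
  rw [hFun, intervalIntegral.integral_of_le ht,
    setIntegral_indicator measurableSet_Icc, setIntegral_const, smul_eq_mul, mul_one]
  have hle : volume (Set.Ioc 0 t ∩ Set.Icc s₁ s₂) ≤ volume (Set.Icc s₁ s₂) :=
    measure_mono Set.inter_subset_right
  have := ENNReal.toReal_mono (by simp [Real.volume_Icc]) hle
  rw [Real.volume_Icc, ENNReal.toReal_ofReal (by linarith)] at this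
  exact this

lemma hFun_sub (s₁ s₂ t s : ℝ) :
    hFun s₁ s₂ t - hFun s₁ s₂ s
      = ∫ r in s..t, Set.indicator (Set.Icc s₁ s₂) (fun _ => (1:ℝ)) r :=
  intervalIntegral.integral_interval_sub_left (ind_intable s₁ s₂ 0 t) (ind_intable s₁ s₂ 0 s)

lemma hFun_diff_le_abs (s₁ s₂ t s : ℝ) : |hFun s₁ s₂ t - hFun s₁ s₂ s| ≤ |t - s| := by
  rw [hFun_sub]
  have := intervalIntegral.norm_integral_le_of_norm_le_const (a := s) (b := t) (C := 1)
    (f := Set.indicator (Set.Icc s₁ s₂) (fun _ => (1:ℝ)))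
    (fun x _ => by
      by_cases hx : x ∈ Set.Icc s₁ s₂ <;> simp [Set.indicator_apply, hx])
  simpa using this

lemma hFun_diff_le_delta {s₁ s₂ : ℝ} (h12 : s₁ ≤ s₂) {t s : ℝ} (ht : 0 ≤ t) (hs : 0 ≤ s) :
    |hFun s₁ s₂ t - hFun s₁ s₂ s| ≤ s₂ - s₁ := by
  rw [abs_sub_le_iff]
  constructor
  · linarith [hFun_le ht h12, hFun_nonneg (s₁ := s₁) (s₂ := s₂) hs]
  · linarith [hFun_le hs h12, hFun_nonneg (s₁ := s₁) (s₂ := s₂) ht]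

lemma pointwise_le {η p s₁ s₂ : ℝ} (hp : 1 ≤ p) (h12 : s₁ ≤ s₂)
    {t s : ℝ} (ht : 0 ≤ t) (hs : 0 ≤ s) :
    |hFun s₁ s₂ t - hFun s₁ s₂ s| ^ p / |t - s| ^ (1 + p * η)
      ≤ phiK p η (s₂ - s₁) |t - s| := by
  have hp0 : (0:ℝ) < p := lt_of_lt_of_le one_pos hp
  rcases eq_or_ne t s with rfl | hts
  · simp [phiK, Real.zero_rpow hp0.ne', min_eq_left (sub_nonneg.2 h12)]
  · have hpos : (0:ℝ) < |t - s| ^ (1 + p * η) :=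
      Real.rpow_pos_of_pos (abs_pos.2 (sub_ne_zero.2 hts)) _
    rw [phiK, div_le_div_iff_of_pos_right hpos]
    exact Real.rpow_le_rpow (abs_nonneg _)
      (le_min (hFun_diff_le_abs s₁ s₂ t s) (hFun_diff_le_delta h12 ht hs)) hp0.le

lemma inner_le {T η p s₁ s₂ : ℝ} (hη0 : 0 < η) (hη1 : η < 1) (hp : 1 ≤ p)
    (hs₁ : 0 ≤ s₁) (h12 : s₁ < s₂) (hs₂ : s₂ ≤ T) {t : ℝ} (ht0 : 0 ≤ t) (htT : t ≤ T) :
    ∫ s in (0:ℝ)..T, |hFun s₁ s₂ t - hFun s₁ s₂ s| ^ p / |t - s| ^ (1 + p * η)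
      ≤ 2 * ((1 / (p - p * η) + 1 / (p * η)) * (s₂ - s₁) ^ (p - p * η)) := by
  set δ := s₂ - s₁ with hδdef
  have hδ : 0 < δ := sub_pos.2 h12
  have hδT : δ ≤ T := by simp only [hδdef]; linarith
  have hT0 : (0:ℝ) ≤ T := le_trans hδ.le hδT
  have hInt : IntegrableOn (fun s => phiK p η δ |t - s|) (Set.Ioc 0 T) volume := by
    have h1 := (phiK_abs_intable hp hη1 hδ hδT (T := T)).comp_sub_left t
    have h2 : IntervalIntegrable (fun x => phiK p η δ |t - x|) volume 0 T := by
      refine h1.mono_set ?_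
      have e1 : t - -T = t + T := by ring
      rw [e1, Set.uIcc_of_le hT0, Set.uIcc_comm,
        Set.uIcc_of_le (by linarith : t - T ≤ t + T)]
      exact Set.Icc_subset_Icc (by linarith) (by linarith)
    exact (intervalIntegrable_iff_integrableOn_Ioc_of_le hT0).mp h2
  have hmono : (∫ s in (0:ℝ)..T,
        |hFun s₁ s₂ t - hFun s₁ s₂ s| ^ p / |t - s| ^ (1 + p * η))
      ≤ ∫ s in (0:ℝ)..T, phiK p η δ |t - s| := by
    rw [intervalIntegral.integral_of_le hT0, intervalIntegral.integral_of_le hT0]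
    refine integral_mono_of_nonneg ?_ hInt ?_
    · exact Filter.Eventually.of_forall fun s =>
        div_nonneg (Real.rpow_nonneg (abs_nonneg _) _) (Real.rpow_nonneg (abs_nonneg _) _)
    · exact (ae_restrict_iff' measurableSet_Ioc).2 (Filter.Eventually.of_forall
        fun s hs => pointwise_le hp h12.le ht0 hs.1.le)
  exact hmono.trans (inner_phiK_le hη0 hη1 hp hδ hδT ht0 htT)

/-- The fractional Sobolev `W_{η,p}` norm bound for `h_{s₁,s₂}`. -/
theorem stmt0 (T η p : ℝ) (hT : 0 < T) (hη0 : 0 < η) (hη1 : η < 1) (hp : 1 ≤ p) :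
    ∃ c > 0, ∀ s₁ s₂ : ℝ, 0 ≤ s₁ → s₁ < s₂ → s₂ ≤ T →
      ((∫ t in (0:ℝ)..T, |hFun s₁ s₂ t| ^ p) +
        ∫ t in (0:ℝ)..T, ∫ s in (0:ℝ)..T,
          |hFun s₁ s₂ t - hFun s₁ s₂ s| ^ p / |t - s| ^ (1 + p * η)) ^ (1 / p)
      ≤ c * (s₂ - s₁) ^ (1 - η) := by
  have hp0 : (0:ℝ) < p := lt_of_lt_of_le one_pos hp
  have hP : (0:ℝ) < p - p * η := by nlinarith
  have hpη : (0:ℝ) < p * η := by positivity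
  set K₀ : ℝ := 1 / (p - p * η) + 1 / (p * η) with hK₀
  have hK₀pos : 0 < K₀ := by positivity
  set C₁ : ℝ := T * T ^ (p * η) + T * (2 * K₀) with hC₁
  have hC₁pos : 0 < C₁ := by positivity
  refine ⟨C₁ ^ (1 / p), Real.rpow_pos_of_pos hC₁pos _, fun s₁ s₂ hs₁ h12 hs₂ => ?_⟩
  set δ := s₂ - s₁ with hδdef
  have hδ : 0 < δ := sub_pos.2 h12
  have hδT : δ ≤ T := by simp only [hδdef]; linarith
  -- bound the first integral
  have hX₁ : (∫ t in (0:ℝ)..T, |hFun s₁ s₂ t| ^ p) ≤ T * δ ^ p := by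
    rw [intervalIntegral.integral_of_le hT.le]
    have : (∫ t in Set.Ioc (0:ℝ) T, δ ^ p) = T * δ ^ p := by
      rw [setIntegral_const, smul_eq_mul, Real.volume_real_Ioc_of_le hT.le, sub_zero]
    rw [← this]
    refine integral_mono_of_nonneg
      (Filter.Eventually.of_forall fun t => Real.rpow_nonneg (abs_nonneg _) _)
      (integrableOn_const measure_Ioc_lt_top.ne) ?_
    refine (ae_restrict_iff' measurableSet_Ioc).2 (Filter.Eventually.of_forall
      fun t ht => ?_)
    refine Real.rpow_le_rpow (abs_nonneg _) ?_ hp0.le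
    rw [abs_of_nonneg (hFun_nonneg ht.1.le)]
    exact hFun_le ht.1.le h12.le
  -- bound the double integral
  have hX₂ : (∫ t in (0:ℝ)..T, ∫ s in (0:ℝ)..T,
        |hFun s₁ s₂ t - hFun s₁ s₂ s| ^ p / |t - s| ^ (1 + p * η))
      ≤ T * (2 * (K₀ * δ ^ (p - p * η))) := by
    rw [intervalIntegral.integral_of_le hT.le]
    have : (∫ t in Set.Ioc (0:ℝ) T, 2 * (K₀ * δ ^ (p - p * η)))
        = T * (2 * (K₀ * δ ^ (p - p * η))) := by
      rw [setIntegral_const, smul_eq_mul, Real.volume_real_Ioc_of_le hT.le, sub_zero]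
    rw [← this]
    refine integral_mono_of_nonneg
      (Filter.Eventually.of_forall fun t => intervalIntegral.integral_nonneg hT.le
        fun s _ => div_nonneg (Real.rpow_nonneg (abs_nonneg _) _)
          (Real.rpow_nonneg (abs_nonneg _) _))
      (integrableOn_const measure_Ioc_lt_top.ne) ?_
    refine (ae_restrict_iff' measurableSet_Ioc).2 (Filter.Eventually.of_forall
      fun t ht => ?_)
    have := inner_le hη0 hη1 hp hs₁ h12 hs₂ ht.1.le ht.2 (T := T)
    calc (∫ s in (0:ℝ)..T, |hFun s₁ s₂ t - hFun s₁ s₂ s| ^ p / |t - s| ^ (1 + p * η))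
        ≤ 2 * ((1 / (p - p * η) + 1 / (p * η)) * δ ^ (p - p * η)) := this
      _ = 2 * (K₀ * δ ^ (p - p * η)) := by rw [hK₀]
  -- combine
  have hδp : δ ^ p ≤ T ^ (p * η) * δ ^ (p - p * η) := by
    have h1 : δ ^ p = δ ^ (p * η) * δ ^ (p - p * η) := by
      rw [← Real.rpow_add hδ]; congr 1; ring
    rw [h1]
    exact mul_le_mul_of_nonneg_right (Real.rpow_le_rpow hδ.le hδT hpη.le)
      (Real.rpow_nonneg hδ.le _)
  have hXle : (∫ t in (0:ℝ)..T, |hFun s₁ s₂ t| ^ p) +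
      (∫ t in (0:ℝ)..T, ∫ s in (0:ℝ)..T,
        |hFun s₁ s₂ t - hFun s₁ s₂ s| ^ p / |t - s| ^ (1 + p * η))
      ≤ C₁ * δ ^ (p - p * η) := by
    have : T * δ ^ p ≤ T * (T ^ (p * η) * δ ^ (p - p * η)) :=
      mul_le_mul_of_nonneg_left hδp hT.le
    calc _ ≤ T * δ ^ p + T * (2 * (K₀ * δ ^ (p - p * η))) := add_le_add hX₁ hX₂
      _ ≤ T * (T ^ (p * η) * δ ^ (p - p * η)) + T * (2 * (K₀ * δ ^ (p - p * η))) := by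
          linarith
      _ = C₁ * δ ^ (p - p * η) := by rw [hC₁]; ring
  have hXnonneg : 0 ≤ (∫ t in (0:ℝ)..T, |hFun s₁ s₂ t| ^ p) +
      (∫ t in (0:ℝ)..T, ∫ s in (0:ℝ)..T,
        |hFun s₁ s₂ t - hFun s₁ s₂ s| ^ p / |t - s| ^ (1 + p * η)) := by
    have h1 : 0 ≤ (∫ t in (0:ℝ)..T, |hFun s₁ s₂ t| ^ p) :=
      intervalIntegral.integral_nonneg hT.le
        fun t _ => Real.rpow_nonneg (abs_nonneg _) _
    have h2 : 0 ≤ (∫ t in (0:ℝ)..T, ∫ s in (0:ℝ)..T,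
        |hFun s₁ s₂ t - hFun s₁ s₂ s| ^ p / |t - s| ^ (1 + p * η)) :=
      intervalIntegral.integral_nonneg hT.le
        fun t _ => intervalIntegral.integral_nonneg hT.le
          fun s _ => div_nonneg (Real.rpow_nonneg (abs_nonneg _) _)
            (Real.rpow_nonneg (abs_nonneg _) _)
    linarith
  calc ((∫ t in (0:ℝ)..T, |hFun s₁ s₂ t| ^ p) +
        ∫ t in (0:ℝ)..T, ∫ s in (0:ℝ)..T,
          |hFun s₁ s₂ t - hFun s₁ s₂ s| ^ p / |t - s| ^ (1 + p * η)) ^ (1 / p)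
      ≤ (C₁ * δ ^ (p - p * η)) ^ (1 / p) :=
        Real.rpow_le_rpow hXnonneg hXle (by positivity)
    _ = C₁ ^ (1 / p) * δ ^ (1 - η) := by
        rw [Real.mul_rpow hC₁pos.le (Real.rpow_nonneg hδ.le _),
          ← Real.rpow_mul hδ.le]
        congr 2
        field_simp
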